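/- For f ∈ O, f is monotonically increasing (f(p) ≤ f(p+q) for all p, q ∈ ℝⁿ₊) and convex if and only if every strict sublevel set C_f(λ) = {p ∈ ℝⁿ₊ : f(p) < λ}, λ > 0, is positive convex. -/

import Mathlib

open Finset

noncomputable def inn {n : ℕ} (p q : Fin n → ℝ) : ℝ := ∑ i, p i * q i

noncomputable def nrm {n : ℕ} (p : Fin n → ℝ) : ℝ := Real.sqrt (∑ i, (p i)^2)

def Orth (n : ℕ) : Set (Fin n → ℝ) := {p | ∀ i, 0 ≤ p i}

noncomputable def B {n : ℕ} (f : (Fin n → ℝ) → ℝ) (p : Fin n → ℝ) : ℝ :=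
  sSup {x | ∃ q ∈ Orth n, q ≠ 0 ∧ x = inn p q / f q}

def MemO {n : ℕ} (f : (Fin n → ℝ) → ℝ) : Prop :=
  (∀ p ∈ Orth n, ∀ l : ℝ, 0 < l → f (l • p) = l * f p) ∧
  (∀ p ∈ Orth n, p ≠ 0 → 0 < f p) ∧
  (∃ c₁ c₂ : ℝ, 0 < c₁ ∧ 0 < c₂ ∧
    ∀ p ∈ Orth n, c₁ * nrm p ≤ f p ∧ f p ≤ c₂ * nrm p) ∧
  ContinuousOn f (Orth n)

def PositiveConvex {n : ℕ} (C : Set (Fin n → ℝ)) : Prop :=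
  Convex ℝ C ∧ ∀ p₀ ∈ Orth n, p₀ ∉ C → ∃ q ∈ Orth n, ∃ γ : ℝ, 0 < γ ∧
    γ ≤ inn p₀ q ∧ ∀ p ∈ C, inn p q < γ

/-! ### Auxiliary lemmas -/

lemma orth_zero {n : ℕ} : (0 : Fin n → ℝ) ∈ Orth n := fun _ => le_refl 0

lemma convex_orth {n : ℕ} : Convex ℝ (Orth n) := by
  intro p hp q hq a b ha hb _
  intro i
  have : (a • p + b • q) i = a * p i + b * q i := rfl
  rw [this]
  exact add_nonneg (mul_nonneg ha (hp i)) (mul_nonneg hb (hq i))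

lemma nrm_zero {n : ℕ} : nrm (0 : Fin n → ℝ) = 0 := by
  simp [nrm]

lemma memO_zero {n : ℕ} {f : (Fin n → ℝ) → ℝ} (hf : MemO f) : f 0 = 0 := by
  obtain ⟨-, -, ⟨c₁, c₂, hc₁, hc₂, hbd⟩, -⟩ := hf
  have h := hbd 0 orth_zero
  rw [nrm_zero] at h
  nlinarith [h.1, h.2]

lemma memO_nonneg {n : ℕ} {f : (Fin n → ℝ) → ℝ} (hf : MemO f) :
    ∀ p ∈ Orth n, 0 ≤ f p := by
  intro p hp
  obtain ⟨-, -, ⟨c₁, c₂, hc₁, hc₂, hbd⟩, -⟩ := hf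
  have h := (hbd p hp).1
  have : 0 ≤ nrm p := Real.sqrt_nonneg _
  nlinarith

lemma orth_smul {n : ℕ} {p : Fin n → ℝ} (hp : p ∈ Orth n) {l : ℝ} (hl : 0 ≤ l) :
    l • p ∈ Orth n := fun i => mul_nonneg hl (hp i)

lemma orth_add {n : ℕ} {p q : Fin n → ℝ} (hp : p ∈ Orth n) (hq : q ∈ Orth n) :
    p + q ∈ Orth n := fun i => add_nonneg (hp i) (hq i)

lemma inn_nonneg {n : ℕ} {p q : Fin n → ℝ} (hp : p ∈ Orth n) (hq : q ∈ Orth n) :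
    0 ≤ inn p q :=
  Finset.sum_nonneg fun i _ => mul_nonneg (hp i) (hq i)

lemma inn_eq_L {n : ℕ} (L : (Fin n → ℝ) →L[ℝ] ℝ) (p : Fin n → ℝ) :
    inn p (fun i => L (Pi.single i 1)) = L p := by
  have hp : ∑ i, p i • (Pi.single i (1:ℝ) : Fin n → ℝ) = p := by
    funext j
    simp only [Finset.sum_apply, Pi.smul_apply, Pi.single_apply, smul_eq_mul,
      mul_ite, mul_one, mul_zero]
    rw [Finset.sum_ite_eq Finset.univ j p]
    simp
  conv_rhs => rw [← hp]
  rw [map_sum, inn]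
  exact Finset.sum_congr rfl fun i _ => by rw [map_smul, smul_eq_mul]

theorem mono_convex_iff_positive_convex {n : ℕ} (f : (Fin n → ℝ) → ℝ) (hf : MemO f) :
    ((∀ p ∈ Orth n, ∀ q ∈ Orth n, f p ≤ f (p + q)) ∧ ConvexOn ℝ (Orth n) f) ↔
      ∀ l : ℝ, 0 < l → PositiveConvex {p | p ∈ Orth n ∧ f p < l} := by
  have hnn := memO_nonneg hf
  have hf0 := memO_zero hf
  obtain ⟨hhom, hpos, ⟨c₁, c₂, hc₁, hc₂, hbd⟩, hcont⟩ := hf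
  constructor
  · rintro ⟨hmono, hconv⟩ l hl
    refine ⟨hconv.convex_lt l, ?_⟩
    intro p₀ hp₀ hp₀C
    have hfp₀ : l ≤ f p₀ := by
      by_contra h'
      push_neg at h'
      exact hp₀C ⟨hp₀, h'⟩
    have hmono' : ∀ x ∈ Orth n, ∀ p : Fin n → ℝ, (∀ i, x i ≤ p i) → f x ≤ f p := by
      intro x hx p hle
      have hq : p - x ∈ Orth n := fun i => by
        have := hle i
        simp only [Pi.sub_apply, sub_nonneg]
        exact this
      have := hmono x hx (p - x) hq
      simpa using this
    obtain ⟨K, hK⟩ : ∃ K : Set (Fin n → ℝ), K = {p | p ∈ Orth n ∧ f p ≤ l} := ⟨_, rfl⟩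
    obtain ⟨D, hD⟩ : ∃ D : Set (Fin n → ℝ),
        D = {x | ∃ p ∈ K, ∀ i, x i ≤ p i} := ⟨_, rfl⟩
    have hKD : K ⊆ D := fun p hp => hD ▸ ⟨p, hp, fun i => le_refl _⟩
    have hDconv : Convex ℝ D := by
      rw [hD, hK]
      rintro x ⟨p, ⟨hpO, hpf⟩, hxp⟩ y ⟨p', ⟨hp'O, hp'f⟩, hyp'⟩ a b ha hb hab
      refine ⟨a • p + b • p', ⟨convex_orth hpO hp'O ha hb hab, ?_⟩, ?_⟩
      · have h1 : f (a • p + b • p') ≤ a * f p + b * f p' := by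
          simpa using hconv.2 hpO hp'O ha hb hab
        have h2 : a * f p ≤ a * l := mul_le_mul_of_nonneg_left hpf ha
        have h3 : b * f p' ≤ b * l := mul_le_mul_of_nonneg_left hp'f hb
        have h4 : a * l + b * l = l := by rw [← add_mul, hab, one_mul]
        linarith
      · intro i
        have hx : (a • x + b • y) i = a * x i + b * y i := rfl
        have hp : (a • p + b • p') i = a * p i + b * p' i := rfl
        rw [hx, hp]
        exact add_le_add (mul_le_mul_of_nonneg_left (hxp i) ha)
          (mul_le_mul_of_nonneg_left (hyp' i) hb)
    have h0K : (0 : Fin n → ℝ) ∈ K := by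
      rw [hK]
      exact ⟨orth_zero, by rw [hf0]; exact hl.le⟩
    -- 0 is in the interior of D
    have hzero_int : (0 : Fin n → ℝ) ∈ interior D := by
      obtain ⟨r, hr⟩ : ∃ r : ℝ, r = l / (c₂ * (Real.sqrt n + 1)) := ⟨_, rfl⟩
      have hsn : (0:ℝ) ≤ Real.sqrt n := Real.sqrt_nonneg _
      have hrpos : 0 < r := by rw [hr]; positivity
      have hVopen : IsOpen {x : Fin n → ℝ | ∀ i, x i < r} := by
        have hset : {x : Fin n → ℝ | ∀ i, x i < r} = ⋂ i, {x | x i < r} := by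
          ext x; simp
        rw [hset]
        exact isOpen_iInter_of_finite fun i =>
          isOpen_lt (continuous_apply i) continuous_const
      have hVsub : {x : Fin n → ℝ | ∀ i, x i < r} ⊆ D := by
        intro x hx
        rw [hD]
        refine ⟨(fun _ => r), ?_, fun i => le_of_lt (hx i)⟩
        rw [hK]
        refine ⟨fun i => hrpos.le, ?_⟩
        have hnrm : nrm (fun _ : Fin n => r) = Real.sqrt n * r := by
          have h1 : ∑ _i : Fin n, r^2 = (n:ℝ) * r^2 := by
            simp [Finset.sum_const, Finset.card_univ, nsmul_eq_mul]
          rw [nrm, h1, Real.sqrt_mul (Nat.cast_nonneg n), Real.sqrt_sq hrpos.le]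
        have hub := (hbd _ (fun i => hrpos.le)).2
        rw [hnrm] at hub
        have hcne : c₂ * (Real.sqrt n + 1) ≠ 0 := by positivity
        have heq : (c₂ * (Real.sqrt n + 1)) * r = l := by
          rw [hr, mul_comm, div_mul_cancel₀ _ hcne]
        nlinarith [mul_pos hc₂ hrpos]
      exact mem_interior.mpr ⟨_, hVsub, hVopen, fun i => hrpos⟩
    -- p₀ is not in the interior of D
    have hp₀ne : p₀ ≠ 0 := by
      intro h0
      rw [h0, hf0] at hfp₀
      linarith
    have hp₀nint : p₀ ∉ interior D := by
      intro hint
      obtain ⟨ε, hε, hball⟩ := Metric.isOpen_iff.mp isOpen_interior p₀ hint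
      have hnp : 0 < ‖p₀‖ := norm_pos_iff.mpr hp₀ne
      obtain ⟨δ, hδ⟩ : ∃ δ : ℝ, δ = ε / (2 * ‖p₀‖) := ⟨_, rfl⟩
      have hδpos : 0 < δ := by rw [hδ]; positivity
      have hmem : (1 + δ) • p₀ ∈ D := by
        apply interior_subset
        apply hball
        rw [Metric.mem_ball, dist_eq_norm]
        have hsub : (1 + δ) • p₀ - p₀ = δ • p₀ := by
          rw [add_smul, one_smul, add_sub_cancel_left]
        rw [hsub, norm_smul, Real.norm_eq_abs, abs_of_pos hδpos]
        have : δ * ‖p₀‖ = ε / 2 := by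
          rw [hδ]; field_simp
        rw [this]
        linarith
      rw [hD] at hmem
      obtain ⟨p, hpK, hle⟩ := hmem
      rw [hK] at hpK
      obtain ⟨hpO, hpf⟩ := hpK
      have h1 : f ((1 + δ) • p₀) ≤ f p := hmono' _ (orth_smul hp₀ (by linarith)) p hle
      rw [hhom p₀ hp₀ (1 + δ) (by linarith)] at h1
      nlinarith
    -- separating hyperplane
    obtain ⟨L, u, hLlt, hLge⟩ := geometric_hahn_banach_open hDconv.interior
      isOpen_interior (convex_singleton p₀) (Set.disjoint_singleton_right.mpr hp₀nint)
    have hLp₀ : u ≤ L p₀ := hLge p₀ rfl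
    have hupos : 0 < u := by
      have := hLlt 0 hzero_int
      simpa using this
    have hDle : ∀ x ∈ D, L x ≤ u := by
      intro x hx
      by_contra h'
      push_neg at h'
      have hLx : 0 < L x := lt_trans hupos h'
      obtain ⟨t, ht⟩ : ∃ t : ℝ, t = u / L x := ⟨_, rfl⟩
      have ht0 : 0 < t := by rw [ht]; positivity
      have ht1 : t < 1 := by rw [ht, div_lt_one hLx]; exact h'
      have hmem : t • x ∈ interior D := by
        have := hDconv.combo_interior_closure_mem_interior hzero_int
          (subset_closure hx) (a := 1 - t) (b := t) (by linarith) ht0.le (by ring)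
        simpa using this
      have hc := hLlt _ hmem
      rw [map_smul, smul_eq_mul, ht, div_mul_cancel₀ _ (ne_of_gt hLx)] at hc
      exact lt_irrefl u hc
    -- the separating vector
    have hqO : (fun i => L (Pi.single i 1)) ∈ Orth n := by
      intro i
      simp only
      by_contra h'
      push_neg at h'
      have hqi : L (Pi.single i 1) < 0 := h'
      obtain ⟨t, ht⟩ : ∃ t : ℝ, t = (u + 1) / (-(L (Pi.single i 1))) := ⟨_, rfl⟩
      have hneg : 0 < -(L (Pi.single i 1)) := by linarith
      have ht0 : 0 < t := by rw [ht]; positivity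
      have hmemD : (-t) • (Pi.single i 1 : Fin n → ℝ) ∈ D := by
        rw [hD]
        refine ⟨0, h0K, fun j => ?_⟩
        have hx : ((-t) • (Pi.single i 1 : Fin n → ℝ)) j
            = -t * (Pi.single i 1 : Fin n → ℝ) j := rfl
        have h0j : (0 : Fin n → ℝ) j = 0 := rfl
        rw [hx, h0j]
        have hsingle : 0 ≤ (Pi.single i 1 : Fin n → ℝ) j := by
          rcases eq_or_ne j i with hji | hji
          · subst hji; simp
          · rw [Pi.single_eq_of_ne hji]
        exact mul_nonpos_of_nonpos_of_nonneg (by linarith) hsingle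
      have hd := hDle _ hmemD
      rw [map_smul, smul_eq_mul] at hd
      have heq : (-t) * L (Pi.single i 1) = u + 1 := by
        rw [ht]
        have hne : L (Pi.single i 1) ≠ 0 := hqi.ne
        field_simp
      linarith
    refine ⟨fun i => L (Pi.single i 1), hqO, u, hupos, ?_, ?_⟩
    · rw [inn_eq_L]
      exact hLp₀
    · rintro p ⟨hpO, hpf⟩
      rw [inn_eq_L]
      rcases eq_or_ne p 0 with h0 | h0
      · rw [h0, map_zero]
        exact hupos
      · have hfp : 0 < f p := hpos p hpO h0
        obtain ⟨μ, hμ⟩ : ∃ μ : ℝ, μ = l / f p := ⟨_, rfl⟩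
        have hμ1 : 1 < μ := by rw [hμ, lt_div_iff₀ hfp]; linarith
        have hmemK : μ • p ∈ K := by
          rw [hK]
          refine ⟨orth_smul hpO (by linarith), ?_⟩
          rw [hhom p hpO μ (by linarith), hμ, div_mul_cancel₀ _ (ne_of_gt hfp)]
        have hle := hDle _ (hKD hmemK)
        rw [map_smul, smul_eq_mul] at hle
        nlinarith
  · intro h
    -- monotonicity
    have hmono : ∀ p ∈ Orth n, ∀ q ∈ Orth n, f p ≤ f (p + q) := by
      intro p hp q hq
      by_contra hlt
      push_neg at hlt
      have hlpos : 0 < f p := lt_of_le_of_lt (hnn _ (orth_add hp hq)) hlt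
      obtain ⟨-, hsep⟩ := h (f p) hlpos
      obtain ⟨r, hr, γ, hγ, hγle, hlt2⟩ :=
        hsep p hp (fun h' => lt_irrefl _ h'.2)
      have h1 := hlt2 (p + q) ⟨orth_add hp hq, hlt⟩
      have h2 : inn (p + q) r = inn p r + inn q r := by
        simp [inn, Pi.add_apply, add_mul, Finset.sum_add_distrib]
      have h3 := inn_nonneg hq hr
      rw [h2] at h1
      linarith
    refine ⟨hmono, ?_⟩
    -- subadditivity
    have hsub : ∀ p ∈ Orth n, ∀ q ∈ Orth n, f (p + q) ≤ f p + f q := by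
      intro p hp q hq
      have key : ∀ ε : ℝ, 0 < ε → f (p + q) ≤ f p + f q + ε := by
        intro ε hε
        obtain ⟨a, ha⟩ : ∃ a : ℝ, a = f p + ε/2 := ⟨_, rfl⟩
        obtain ⟨b, hb⟩ : ∃ b : ℝ, b = f q + ε/2 := ⟨_, rfl⟩
        have hfp := hnn p hp
        have hfq := hnn q hq
        have ha0 : 0 < a := by rw [ha]; linarith
        have hb0 : 0 < b := by rw [hb]; linarith
        obtain ⟨hcvx, -⟩ := h 1 one_pos
        have h1 : (1/a) • p ∈ {x | x ∈ Orth n ∧ f x < 1} := by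
          refine ⟨orth_smul hp (by positivity), ?_⟩
          rw [hhom p hp (1/a) (by positivity), one_div, inv_mul_eq_div, div_lt_one ha0]
          linarith
        have h2 : (1/b) • q ∈ {x | x ∈ Orth n ∧ f x < 1} := by
          refine ⟨orth_smul hq (by positivity), ?_⟩
          rw [hhom q hq (1/b) (by positivity), one_div, inv_mul_eq_div, div_lt_one hb0]
          linarith
        have hs : 0 < a + b := by linarith
        have hcomb : (a/(a+b)) • ((1/a) • p) + (b/(a+b)) • ((1/b) • q)
            = (1/(a+b)) • (p + q) := by
          rw [smul_smul, smul_smul, smul_add]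
          congr 2 <;> field_simp <;> ring
        have hmem := hcvx h1 h2 (a := a/(a+b)) (b := b/(a+b))
          (by positivity) (by positivity) (by field_simp)
        rw [hcomb] at hmem
        obtain ⟨-, hmem2⟩ := hmem
        rw [hhom _ (orth_add hp hq) (1/(a+b)) (by positivity), one_div,
          inv_mul_eq_div, div_lt_one hs] at hmem2
        rw [ha, hb] at hmem2
        linarith
      exact le_of_forall_pos_le_add key
    refine ⟨convex_orth, ?_⟩
    intro p hp q hq a b ha hb hab
    rcases eq_or_lt_of_le ha with ha0 | ha0
    · have hb1 : b = 1 := by linarith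
      rw [← ha0, hb1]
      simp
    · rcases eq_or_lt_of_le hb with hb0 | hb0
      · have ha1 : a = 1 := by linarith
        rw [← hb0, ha1]
        simp
      · have hcalc : f (a • p + b • q) ≤ a * f p + b * f q := by
          calc f (a • p + b • q) ≤ f (a • p) + f (b • q) :=
                hsub _ (orth_smul hp ha) _ (orth_smul hq hb)
            _ = a * f p + b * f q := by
                rw [hhom p hp a ha0, hhom q hq b hb0]
        simpa using hcalc
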